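/- Let C be a square integer matrix of even size with entries ±1 such that C³ = C². Then C² = 0 and hence C is nilpotent with trace 0. -/

import Mathlib

lemma fixed_vec_zero (N : ℕ) (hN : Even N) (C : Matrix (Fin N) (Fin N) ℤ)
    (hpm : ∀ i j, C i j = 1 ∨ C i j = -1)
    (v : Fin N → ℤ) (hv : C.mulVec v = v) : v = 0 := by
  have hodd : Odd ((1 : ℤ) - N) := by
    obtain ⟨k, hk⟩ := hN
    exact ⟨-k, by push_cast [hk]; ring⟩
  have hdvd : ∀ m : ℕ, ∀ i, (2 : ℤ) ^ m ∣ v i := by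
    intro m
    induction m with
    | zero => simp
    | succ m ih =>
      set s : ℤ := ∑ k, v k with hs
      have hvi : ∀ i, (2 : ℤ) ^ (m + 1) ∣ v i - s := by
        intro i
        have h1 : v i = ∑ k, C i k * v k := by
          conv_lhs => rw [← hv]
          simp [Matrix.mulVec, dotProduct]
        have h2 : v i - s = ∑ k, (C i k - 1) * v k := by
          rw [h1, hs, ← Finset.sum_sub_distrib]
          congr 1; ext k; ring
        rw [h2]
        apply Finset.dvd_sum
        intro k _
        rw [pow_succ']
        apply mul_dvd_mul _ (ih k)
        rcases hpm i k with h | h <;> simp [h]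
      have hss : (2 : ℤ) ^ (m + 1) ∣ (1 - N) * s := by
        have : (1 - (N : ℤ)) * s = ∑ i, (v i - s) := by
          rw [Finset.sum_sub_distrib, ← hs]
          simp [Finset.sum_const, mul_comm]
          ring
        rw [this]
        exact Finset.dvd_sum fun i _ => hvi i
      have hcop : IsCoprime ((2 : ℤ) ^ (m + 1)) (1 - N) := by
        apply IsCoprime.pow_left
        obtain ⟨k, hk⟩ := hodd
        exact ⟨-k, 1, by rw [hk]; ring⟩
      have hds : (2 : ℤ) ^ (m + 1) ∣ s := hcop.dvd_of_dvd_mul_left hss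
      intro i
      have := hvi i
      have : v i = (v i - s) + s := by ring
      rw [this]
      exact dvd_add (hvi i) hds
  funext i
  by_contra hne
  have hpos : 0 < |v i| := abs_pos.mpr hne
  have hd : (2 : ℤ) ^ (v i).natAbs ∣ |v i| := (dvd_abs _ _).mpr (hdvd _ i)
  have hle : (2 : ℤ) ^ (v i).natAbs ≤ |v i| := Int.le_of_dvd hpos hd
  have hlt : ((v i).natAbs : ℤ) < 2 ^ (v i).natAbs := by
    exact_mod_cast Nat.lt_two_pow_self (n := (v i).natAbs)
  rw [Int.abs_eq_natAbs] at hle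
  omega

theorem stmt_8 (N : ℕ) (hN : Even N) (C : Matrix (Fin N) (Fin N) ℤ)
    (hpm : ∀ i j, C i j = 1 ∨ C i j = -1)
    (h : C ^ 3 = C ^ 2) :
    C ^ 2 = 0 ∧ IsNilpotent C ∧ C.trace = 0 := by
  have hsq : C ^ 2 = 0 := by
    ext i j
    have hcol : C.mulVec (fun i => (C ^ 2) i j) = fun i => (C ^ 2) i j := by
      funext i
      have : (C ^ 3) i j = (C ^ 2) i j := by rw [h]
      calc C.mulVec (fun i => (C ^ 2) i j) i
          = (C * C ^ 2) i j := by simp [Matrix.mulVec, dotProduct, Matrix.mul_apply]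
        _ = (C ^ 3) i j := by rw [← pow_succ']
        _ = (C ^ 2) i j := this
    have := congrFun (fixed_vec_zero N hN C hpm _ hcol) i
    simpa using this
  have hnil : IsNilpotent C := ⟨2, hsq⟩
  refine ⟨hsq, hnil, ?_⟩
  exact (Matrix.isNilpotent_trace_of_isNilpotent hnil).eq_zero
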